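/- For every involution z in the symmetric group S_{n+1}, the permutation [[Cyc(z)]]_des, formed by listing the pairs (a₁,b₁),…,(a_m,b_m) of Cyc(z) in increasing order of b's, concatenating b₁a₁b₂a₂⋯b_ma_m, and deduplicating (keeping only first occurrences left to right), is an element of A^A(z), i.e., a minimal-length permutation w ∈ S_{n+1} with w ∘ w⁻¹ = z under the Demazure product. -/

import Mathlib

/-- The adjacent transposition `t_i = (i, i+1)`, as a permutation of `ℤ`. -/
def tA (i : ℤ) : Equiv.Perm ℤ := Equiv.swap i (i + 1)

/-- The symmetric group `S_{n+1}`, realized as the permutations of `ℤ` that fix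
everything outside `{1, …, n+1}`. -/
def Sgrp (n : ℕ) : Set (Equiv.Perm ℤ) :=
  {w | ∀ i : ℤ, (i < 1 ∨ (n : ℤ) + 1 < i) → w i = i}

/-- Coxeter length on `S_{n+1}`. -/
noncomputable def lenA (n : ℕ) (w : Equiv.Perm ℤ) : ℕ :=
  sInf {m | ∃ l : List ℤ, (∀ i ∈ l, 1 ≤ i ∧ i ≤ (n : ℤ)) ∧
    (l.map tA).prod = w ∧ l.length = m}

/-- Deduplicate a word, keeping only the first occurrence of each letter
(left to right). -/
def dedupFirst : List ℤ → List ℤ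
  | [] => []
  | a :: l => a :: (dedupFirst l).filter (fun x => x != a)

/-- The word `b₁a₁b₂a₂⋯b_ma_m` obtained by listing the pairs
`(a,b) ∈ Cyc(z) = {(a,b) : a ≤ b = z(a)}` in increasing order of the `b`'s and
concatenating `b, a` for each pair (here `a = z(b)`). -/
noncomputable def cycWordDes (n : ℕ) (z : Equiv.Perm ℤ) : List ℤ :=
  (((Finset.Icc (1 : ℤ) ((n : ℤ) + 1)).filter (fun b => z b ≤ b)).sort (· ≤ ·)).foldr
    (fun b acc => b :: z b :: acc) []

namespace S17

/-- basic values of tA -/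
lemma tA_left (j : ℤ) : tA j j = j + 1 := Equiv.swap_apply_left _ _

lemma tA_right (j : ℤ) : tA j (j+1) = j := Equiv.swap_apply_right _ _

lemma tA_other (j i : ℤ) (h1 : i ≠ j) (h2 : i ≠ j + 1) : tA j i = i :=
  Equiv.swap_apply_of_ne_of_ne h1 h2

lemma tA_mul_self (j : ℤ) : tA j * tA j = 1 := Equiv.swap_mul_self _ _

lemma tA_inv (j : ℤ) : (tA j)⁻¹ = tA j := Equiv.symm_swap _ _

lemma tA_ne_one (j : ℤ) : tA j ≠ 1 := by
  intro h
  have h2 : tA j j = j := by rw [h]; rfl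
  rw [tA_left] at h2
  omega

/-- tA is strictly monotone off the crossing pair -/
lemma tA_mono' {j a b : ℤ} (hab : a < b) (ha : a ≠ j) : tA j a < tA j b := by
  rcases eq_or_ne a (j+1) with rfl | ha2
  · rw [tA_right]
    rcases eq_or_ne b (j+1) with rfl | hb2
    · omega
    · rcases eq_or_ne b j with rfl | hb1
      · omega
      · rw [tA_other j b hb1 hb2]; omega
  · rw [tA_other j a ha ha2]
    rcases eq_or_ne b j with rfl | hb1
    · rw [tA_left]; omega
    · rcases eq_or_ne b (j+1) with rfl | hb2
      · rw [tA_right]; omega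
      · rw [tA_other j b hb1 hb2]; omega

lemma tA_mono {j a b : ℤ} (hab : a < b) (hne : ¬(a = j ∧ b = j + 1)) :
    tA j a < tA j b := by
  rcases eq_or_ne a j with rfl | ha
  · have hb : b ≠ a + 1 := fun h => hne ⟨rfl, h⟩
    rcases eq_or_ne b (a+1) with rfl | hb2
    · exact absurd rfl hb
    · rw [tA_left, tA_other a b (by omega) hb2]; omega
  · exact tA_mono' hab ha

lemma tA_mem_Sgrp {n : ℕ} {j : ℤ} (h1 : 1 ≤ j) (h2 : j ≤ (n:ℤ)) : tA j ∈ Sgrp n := by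
  intro i hi
  exact tA_other j i (by omega) (by omega)

lemma Sgrp_one {n : ℕ} : (1 : Equiv.Perm ℤ) ∈ Sgrp n := fun i _ => rfl

lemma Sgrp_mul {n : ℕ} {u v : Equiv.Perm ℤ} (hu : u ∈ Sgrp n) (hv : v ∈ Sgrp n) :
    u * v ∈ Sgrp n := by
  intro i hi
  simp only [Equiv.Perm.mul_apply]
  rw [hv i hi, hu i hi]

lemma Sgrp_inv {n : ℕ} {u : Equiv.Perm ℤ} (hu : u ∈ Sgrp n) : u⁻¹ ∈ Sgrp n := by
  intro i hi
  have : u i = i := hu i hi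
  exact (Equiv.symm_apply_eq u).mpr this.symm

end S17

namespace S17

noncomputable def IccZ (n : ℕ) : Finset ℤ := Finset.Icc 1 ((n:ℤ)+1)

noncomputable def InvSet (n : ℕ) (w : Equiv.Perm ℤ) : Finset (ℤ×ℤ) :=
  ((IccZ n) ×ˢ (IccZ n)).filter (fun p => p.1 < p.2 ∧ w p.2 < w p.1)

noncomputable def NN (n : ℕ) (w : Equiv.Perm ℤ) : ℕ := (InvSet n w).card

noncomputable def kap (n : ℕ) (z : Equiv.Perm ℤ) : ℕ := ((IccZ n).filter (fun i => z i ≠ i)).card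

lemma tA_invol (j x : ℤ) : tA j (tA j x) = x := by
  rw [← Equiv.Perm.mul_apply, tA_mul_self]; rfl

lemma mem_IccZ {n : ℕ} {i : ℤ} : i ∈ IccZ n ↔ 1 ≤ i ∧ i ≤ (n:ℤ)+1 := Finset.mem_Icc

lemma Sgrp_maps {n : ℕ} {w : Equiv.Perm ℤ} (hw : w ∈ Sgrp n) {i : ℤ}
    (hi : i ∈ IccZ n) : w i ∈ IccZ n := by
  rw [mem_IccZ] at hi ⊢
  by_contra h
  have h2 : w⁻¹ (w i) = w i := Sgrp_inv hw (w i) (by omega)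
  rw [Equiv.Perm.coe_inv, Equiv.symm_apply_apply] at h2
  omega

lemma tA_mem_IccZ {n : ℕ} {j i : ℤ} (h1 : 1 ≤ j) (h2 : j ≤ (n:ℤ)) (hi : i ∈ IccZ n) :
    tA j i ∈ IccZ n := Sgrp_maps (tA_mem_Sgrp h1 h2) hi

lemma mem_InvSet {n : ℕ} {w : Equiv.Perm ℤ} {p : ℤ×ℤ} :
    p ∈ InvSet n w ↔ (p.1 ∈ IccZ n ∧ p.2 ∈ IccZ n) ∧ p.1 < p.2 ∧ w p.2 < w p.1 := by
  simp [InvSet, Finset.mem_filter, Finset.mem_product]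

lemma NN_one (n : ℕ) : NN n 1 = 0 := by
  rw [NN, Finset.card_eq_zero]
  ext p
  simp only [mem_InvSet, Finset.notMem_empty, iff_false]
  rintro ⟨-, h1, h2⟩
  simp at h2
  omega

lemma NN_asc {n : ℕ} {w : Equiv.Perm ℤ} {j : ℤ} (h1 : 1 ≤ j) (h2 : j ≤ (n:ℤ))
    (ha : w j < w (j+1)) : NN n (w * tA j) = NN n w + 1 := by
  have hp0 : ((j, j+1) : ℤ×ℤ) ∈ InvSet n (w * tA j) := by
    rw [mem_InvSet]
    refine ⟨⟨by rw [mem_IccZ]; omega, by rw [mem_IccZ]; omega⟩, by omega, ?_⟩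
    simp only [Equiv.Perm.mul_apply, tA_left, tA_right]
    exact ha
  have hcard : ((InvSet n (w * tA j)).erase (j, j+1)).card = NN n w := by
    apply Finset.card_bij' (i := fun p _ => ((tA j p.1, tA j p.2) : ℤ×ℤ))
      (j := fun q _ => ((tA j q.1, tA j q.2) : ℤ×ℤ))
    · intro p hp
      rw [Finset.mem_erase] at hp
      obtain ⟨hne, hp⟩ := hp
      rw [mem_InvSet] at hp ⊢
      obtain ⟨⟨hp1, hp2⟩, hlt, hinv⟩ := hp
      have hmono : tA j p.1 < tA j p.2 := by
        apply tA_mono hlt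
        rintro ⟨e1, e2⟩
        exact hne (Prod.ext e1 e2)
      refine ⟨⟨tA_mem_IccZ h1 h2 hp1, tA_mem_IccZ h1 h2 hp2⟩, hmono, ?_⟩
      simpa only [Equiv.Perm.mul_apply] using hinv
    · intro q hq
      rw [mem_InvSet] at hq
      obtain ⟨⟨hq1, hq2⟩, hlt, hinv⟩ := hq
      rw [Finset.mem_erase, mem_InvSet]
      have hnot : ¬(q.1 = j ∧ q.2 = j + 1) := by
        rintro ⟨e1, e2⟩
        rw [e1, e2] at hinv
        omega
      have hmono : tA j q.1 < tA j q.2 := tA_mono hlt hnot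
      constructor
      · intro he
        have e1 : tA j q.1 = j := congrArg Prod.fst he
        have e2 : tA j q.2 = j + 1 := congrArg Prod.snd he
        have h1' : q.1 = j + 1 := by
          have := congrArg (tA j) e1
          rw [tA_invol, tA_left] at this
          omega
        have h2' : q.2 = j := by
          have := congrArg (tA j) e2
          rw [tA_invol, tA_right] at this
          omega
        omega
      · refine ⟨⟨tA_mem_IccZ h1 h2 hq1, tA_mem_IccZ h1 h2 hq2⟩, hmono, ?_⟩
        simp only [Equiv.Perm.mul_apply]
        rw [tA_invol, tA_invol]
        exact hinv
    · intro p _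
      simp [tA_invol]
    · intro q _
      simp [tA_invol]
  have := Finset.card_erase_of_mem hp0
  rw [hcard] at this
  have hpos : 0 < (InvSet n (w * tA j)).card := Finset.card_pos.mpr ⟨_, hp0⟩
  rw [NN]
  omega

lemma NN_desc {n : ℕ} {w : Equiv.Perm ℤ} {j : ℤ} (h1 : 1 ≤ j) (h2 : j ≤ (n:ℤ))
    (hd : w (j+1) < w j) : NN n (w * tA j) + 1 = NN n w := by
  have ha : (w * tA j) j < (w * tA j) (j+1) := by
    simp only [Equiv.Perm.mul_apply, tA_left, tA_right]
    exact hd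
  have := NN_asc h1 h2 ha
  rw [mul_assoc, tA_mul_self, mul_one] at this
  omega

end S17

namespace S17

lemma NN_inv {n : ℕ} {w : Equiv.Perm ℤ} (hw : w ∈ Sgrp n) : NN n w⁻¹ = NN n w := by
  apply Finset.card_bij' (i := fun p _ => ((w⁻¹ p.2, w⁻¹ p.1) : ℤ×ℤ))
    (j := fun q _ => ((w q.2, w q.1) : ℤ×ℤ))
  · intro p hp
    rw [mem_InvSet] at hp ⊢
    obtain ⟨⟨hp1, hp2⟩, hlt, hinv⟩ := hp
    exact ⟨⟨Sgrp_maps (Sgrp_inv hw) hp2, Sgrp_maps (Sgrp_inv hw) hp1⟩, hinv, by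
      simp only [Equiv.Perm.coe_inv, Equiv.apply_symm_apply]; exact hlt⟩
  · intro q hq
    rw [mem_InvSet] at hq ⊢
    obtain ⟨⟨hq1, hq2⟩, hlt, hinv⟩ := hq
    exact ⟨⟨Sgrp_maps hw hq2, Sgrp_maps hw hq1⟩, hinv, by
      simp only [Equiv.Perm.coe_inv, Equiv.symm_apply_apply]; exact hlt⟩
  · intro p _; simp
  · intro q _; simp

lemma NN_asc_left {n : ℕ} {w : Equiv.Perm ℤ} {j : ℤ} (hw : w ∈ Sgrp n)
    (h1 : 1 ≤ j) (h2 : j ≤ (n:ℤ)) (ha : w⁻¹ j < w⁻¹ (j+1)) :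
    NN n (tA j * w) = NN n w + 1 := by
  have htw : tA j * w ∈ Sgrp n := Sgrp_mul (tA_mem_Sgrp h1 h2) hw
  have : (tA j * w)⁻¹ = w⁻¹ * tA j := by rw [mul_inv_rev, tA_inv]
  rw [← NN_inv htw, this, NN_asc h1 h2 ha, NN_inv hw]

lemma NN_desc_left {n : ℕ} {w : Equiv.Perm ℤ} {j : ℤ} (hw : w ∈ Sgrp n)
    (h1 : 1 ≤ j) (h2 : j ≤ (n:ℤ)) (hd : w⁻¹ (j+1) < w⁻¹ j) :
    NN n (tA j * w) + 1 = NN n w := by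
  have htw : tA j * w ∈ Sgrp n := Sgrp_mul (tA_mem_Sgrp h1 h2) hw
  have : (tA j * w)⁻¹ = w⁻¹ * tA j := by rw [mul_inv_rev, tA_inv]
  rw [← NN_inv htw, this, ← NN_inv hw]
  exact NN_desc h1 h2 hd

lemma apply_ne {w : Equiv.Perm ℤ} {j : ℤ} : w j ≠ w (j+1) := by
  intro h
  have := w.injective h
  omega

lemma id_of_ascents {n : ℕ} {w : Equiv.Perm ℤ} (hw : w ∈ Sgrp n)
    (ha : ∀ j : ℤ, 1 ≤ j → j ≤ (n:ℤ) → w j < w (j+1)) : w = 1 := by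
  have mono : ∀ a b : ℤ, 1 ≤ a → a + 1 ≤ b → b ≤ (n:ℤ)+1 → w a < w b := by
    intro a b ha1 hab
    refine Int.le_induction (motive := fun b _ => b ≤ (n:ℤ)+1 → w a < w b) ?_ ?_ b hab
    · intro h
      exact ha a ha1 (by omega)
    · intro b' hb' ih h
      have h1 := ih (by omega)
      have h2 := ha b' (by omega) (by omega)
      omega
  have hub : ∀ a : ℤ, 1 ≤ a → a ≤ (n:ℤ)+1 → a ≤ w a := by
    intro a h1
    refine Int.le_induction (motive := fun a _ => a ≤ (n:ℤ)+1 → a ≤ w a) ?_ ?_ a h1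
    · intro h
      have := Sgrp_maps hw (mem_IccZ.mpr ⟨le_refl 1, h⟩)
      rw [mem_IccZ] at this
      omega
    · intro a' ha' ih h
      have h1 := ih (by omega)
      have h2 := mono a' (a'+1) (by omega) (by omega) (by omega)
      omega
  have hlb : ∀ k : ℕ, ∀ a : ℤ, a = (n:ℤ)+1 - k → 1 ≤ a → w a ≤ a := by
    intro k
    induction k with
    | zero =>
      intro a hae h1
      have := Sgrp_maps hw (mem_IccZ.mpr ⟨h1, by omega⟩)
      rw [mem_IccZ] at this
      omega
    | succ m ih =>
      intro a hae h1
      have hle : a ≤ (n:ℤ)+1 := by omega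
      rcases eq_or_lt_of_le hle with he | hlt
      · have := Sgrp_maps hw (mem_IccZ.mpr ⟨h1, by omega⟩)
        rw [mem_IccZ] at this
        omega
      · have h2 := ih (a+1) (by omega) (by omega)
        have h3 := mono a (a+1) h1 (by omega) (by omega)
        omega
  apply Equiv.ext
  intro a
  rcases le_or_gt a 0 with h | h
  · exact hw a (by omega)
  rcases le_or_gt a ((n:ℤ)+1) with h2 | h2
  · have u1 := hub a (by omega) h2
    have u2 : w a ≤ a := by
      exact hlb ((n:ℤ)+1-a).toNat a (by omega) (by omega)
    simp only [Equiv.Perm.one_apply]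
    omega
  · exact hw a (by omega)

lemma exists_descent {n : ℕ} {w : Equiv.Perm ℤ} (hw : w ∈ Sgrp n) (hne : w ≠ 1) :
    ∃ j : ℤ, 1 ≤ j ∧ j ≤ (n:ℤ) ∧ w (j+1) < w j := by
  by_contra h
  push_neg at h
  apply hne
  apply id_of_ascents hw
  intro j h1 h2
  have := h j h1 h2
  have hne2 : w j ≠ w (j+1) := apply_ne
  omega

lemma prod_mem_Sgrp {n : ℕ} : ∀ l : List ℤ, (∀ i ∈ l, 1 ≤ i ∧ i ≤ (n:ℤ)) →
    (l.map tA).prod ∈ Sgrp n := by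
  intro l
  induction l with
  | nil => intro _; simpa using Sgrp_one
  | cons j l ih =>
    intro h
    rw [List.map_cons, List.prod_cons]
    exact Sgrp_mul (tA_mem_Sgrp (h j (by simp)).1 (h j (by simp)).2)
      (ih fun i hi => h i (by simp [hi]))

lemma word_exists {n : ℕ} : ∀ k : ℕ, ∀ w ∈ Sgrp n, NN n w = k →
    ∃ l : List ℤ, (∀ i ∈ l, 1 ≤ i ∧ i ≤ (n:ℤ)) ∧ (l.map tA).prod = w ∧
      l.length = NN n w := by
  intro k
  induction k using Nat.strong_induction_on with
  | _ k ih =>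
    intro w hw hk
    rcases eq_or_ne w 1 with rfl | hne
    · exact ⟨[], by simp, by simp, by simp [NN_one]⟩
    · obtain ⟨j, h1, h2, hd⟩ := exists_descent hw hne
      have hdrop := NN_desc h1 h2 hd
      have hw' : w * tA j ∈ Sgrp n := Sgrp_mul hw (tA_mem_Sgrp h1 h2)
      obtain ⟨l, hl1, hl2, hl3⟩ := ih (NN n (w * tA j)) (by omega) (w * tA j) hw' rfl
      refine ⟨l ++ [j], ?_, ?_, ?_⟩
      · intro i hi
        rcases List.mem_append.mp hi with h | h
        · exact hl1 i h
        · simp at h; subst h; exact ⟨h1, h2⟩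
      · rw [List.map_append, List.prod_append, hl2]
        simp [mul_assoc, tA_mul_self]
      · simp [hl3]; omega

lemma NN_le_length {n : ℕ} : ∀ l : List ℤ, (∀ i ∈ l, 1 ≤ i ∧ i ≤ (n:ℤ)) →
    NN n ((l.map tA).prod) ≤ l.length := by
  intro l
  induction l with
  | nil => simp [NN_one]
  | cons j l ih =>
    intro h
    rw [List.map_cons, List.prod_cons]
    set u := (l.map tA).prod with hu
    have hus : u ∈ Sgrp n := prod_mem_Sgrp l (fun i hi => h i (by simp [hi]))
    have h1 := (h j (by simp)).1
    have h2 := (h j (by simp)).2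
    have hrec := ih (fun i hi => h i (by simp [hi]))
    have hne : u⁻¹ j ≠ u⁻¹ (j+1) := by
      intro he
      have := u⁻¹.injective he
      omega
    rcases lt_or_gt_of_ne hne with hc | hc
    · have := NN_asc_left hus h1 h2 hc
      simp only [List.length_cons]
      omega
    · have := NN_desc_left hus h1 h2 hc
      simp only [List.length_cons]
      omega

lemma lenA_eq_NN {n : ℕ} {w : Equiv.Perm ℤ} (hw : w ∈ Sgrp n) : lenA n w = NN n w := by
  obtain ⟨l, hl1, hl2, hl3⟩ := word_exists (NN n w) w hw rfl
  unfold lenA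
  apply le_antisymm
  · exact Nat.sInf_le ⟨l, hl1, hl2, hl3⟩
  · have hne : {m | ∃ l : List ℤ, (∀ i ∈ l, 1 ≤ i ∧ i ≤ (n:ℤ)) ∧
        (l.map tA).prod = w ∧ l.length = m}.Nonempty := ⟨NN n w, ⟨l, hl1, hl2, hl3⟩⟩
    apply le_csInf hne
    rintro m ⟨l', hl1', hl2', hl3'⟩
    rw [← hl3', ← hl2']
    exact NN_le_length l' hl1'

lemma lenA_succ_right_iff {n : ℕ} {w : Equiv.Perm ℤ} {j : ℤ} (hw : w ∈ Sgrp n)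
    (h1 : 1 ≤ j) (h2 : j ≤ (n:ℤ)) :
    (lenA n (w * tA j) = lenA n w + 1) ↔ w j < w (j+1) := by
  have hw' : w * tA j ∈ Sgrp n := Sgrp_mul hw (tA_mem_Sgrp h1 h2)
  rw [lenA_eq_NN hw', lenA_eq_NN hw]
  constructor
  · intro he
    by_contra hc
    have hne : w j ≠ w (j+1) := apply_ne
    have hd : w (j+1) < w j := by omega
    have := NN_desc h1 h2 hd
    omega
  · exact NN_asc h1 h2

lemma lenA_succ_left_iff {n : ℕ} {w : Equiv.Perm ℤ} {j : ℤ} (hw : w ∈ Sgrp n)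
    (h1 : 1 ≤ j) (h2 : j ≤ (n:ℤ)) :
    (lenA n (tA j * w) = lenA n w + 1) ↔ w⁻¹ j < w⁻¹ (j+1) := by
  have hw' : tA j * w ∈ Sgrp n := Sgrp_mul (tA_mem_Sgrp h1 h2) hw
  rw [lenA_eq_NN hw', lenA_eq_NN hw]
  constructor
  · intro he
    by_contra hc
    have hne : w⁻¹ j ≠ w⁻¹ (j+1) := by
      intro he2
      have := w⁻¹.injective he2
      omega
    have hd : w⁻¹ (j+1) < w⁻¹ j := by omega
    have := NN_desc_left hw h1 h2 hd
    omega
  · exact NN_asc_left hw h1 h2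

end S17

namespace S17

section DemPart

variable {n : ℕ} {dem : Equiv.Perm ℤ → Equiv.Perm ℤ → Equiv.Perm ℤ}
variable (hassoc : ∀ u v w, dem (dem u v) w = dem u (dem v w))
variable (hright : ∀ w ∈ Sgrp n, ∀ j : ℤ, 1 ≤ j → j ≤ (n : ℤ) →
      dem w (tA j) = if lenA n (w * tA j) = lenA n w + 1 then w * tA j else w)
variable (hleft : ∀ w ∈ Sgrp n, ∀ j : ℤ, 1 ≤ j → j ≤ (n : ℤ) →
      dem (tA j) w = if lenA n (tA j * w) = lenA n w + 1 then tA j * w else w)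

include hright in
lemma dem_t_right {w : Equiv.Perm ℤ} {j : ℤ} (hw : w ∈ Sgrp n) (h1 : 1 ≤ j)
    (h2 : j ≤ (n:ℤ)) :
    dem w (tA j) = if w j < w (j+1) then w * tA j else w := by
  rw [hright w hw j h1 h2]
  by_cases hc : w j < w (j+1)
  · rw [if_pos ((lenA_succ_right_iff hw h1 h2).mpr hc), if_pos hc]
  · rw [if_neg (fun he => hc ((lenA_succ_right_iff hw h1 h2).mp he)), if_neg hc]

include hleft in
lemma dem_t_left {w : Equiv.Perm ℤ} {j : ℤ} (hw : w ∈ Sgrp n) (h1 : 1 ≤ j)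
    (h2 : j ≤ (n:ℤ)) :
    dem (tA j) w = if w⁻¹ j < w⁻¹ (j+1) then tA j * w else w := by
  rw [hleft w hw j h1 h2]
  by_cases hc : w⁻¹ j < w⁻¹ (j+1)
  · rw [if_pos ((lenA_succ_left_iff hw h1 h2).mpr hc), if_pos hc]
  · rw [if_neg (fun he => hc ((lenA_succ_left_iff hw h1 h2).mp he)), if_neg hc]

lemma comm_fix {y : Equiv.Perm ℤ} {j : ℤ} (hyi : y⁻¹ = y) (hfj : y j = j)
    (hfj1 : y (j+1) = j+1) : y * tA j = tA j * y := by
  apply Equiv.ext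
  intro x
  simp only [Equiv.Perm.mul_apply]
  rcases eq_or_ne x j with rfl | hx1
  · rw [tA_left, hfj1, hfj, tA_left]
  rcases eq_or_ne x (j+1) with rfl | hx2
  · rw [tA_right, hfj, hfj1, tA_right]
  rw [tA_other j x hx1 hx2]
  have hyx1 : y x ≠ j := by
    intro he
    have : x = y⁻¹ j := by rw [← he, Equiv.Perm.coe_inv, Equiv.symm_apply_apply]
    rw [hyi, hfj] at this
    exact hx1 this
  have hyx2 : y x ≠ j + 1 := by
    intro he
    have : x = y⁻¹ (j+1) := by rw [← he, Equiv.Perm.coe_inv, Equiv.symm_apply_apply]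
    rw [hyi, hfj1] at this
    exact hx2 this
  rw [tA_other j (y x) hyx1 hyx2]

lemma inv_fix {y : Equiv.Perm ℤ} {j : ℤ} (hyi : y⁻¹ = y) (hfj : y j = j)
    (hfj1 : y (j+1) = j+1) : (y * tA j)⁻¹ = y * tA j := by
  rw [mul_inv_rev, tA_inv, hyi, comm_fix hyi hfj hfj1]

lemma kap_fix {n : ℕ} {y : Equiv.Perm ℤ} {j : ℤ} (h1 : 1 ≤ j) (h2 : j ≤ (n:ℤ))
    (hfj : y j = j) (hfj1 : y (j+1) = j+1) :
    kap n (y * tA j) = kap n y + 2 := by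
  have hset : (IccZ n).filter (fun i => (y * tA j) i ≠ i) =
      insert j (insert (j+1) ((IccZ n).filter (fun i => y i ≠ i))) := by
    ext i
    simp only [Finset.mem_filter, Finset.mem_insert]
    simp only [Equiv.Perm.mul_apply]
    rcases eq_or_ne i j with rfl | hi1
    · simp only [tA_left, hfj1]
      constructor
      · intro _; tauto
      · intro _
        exact ⟨mem_IccZ.mpr ⟨by omega, by omega⟩, by omega⟩
    rcases eq_or_ne i (j+1) with rfl | hi2
    · simp only [tA_right, hfj]
      constructor
      · intro _; tauto
      · intro _
        exact ⟨mem_IccZ.mpr ⟨by omega, by omega⟩, by omega⟩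
    · rw [tA_other j i hi1 hi2]
      constructor
      · rintro ⟨hm, hne⟩
        right; right; exact ⟨hm, hne⟩
      · rintro (he | he | ⟨hm, hne⟩)
        · exact absurd he hi1
        · exact absurd he hi2
        · exact ⟨hm, hne⟩
  rw [kap, hset]
  have hj1mem : j + 1 ∉ (IccZ n).filter (fun i => y i ≠ i) := by
    simp only [Finset.mem_filter]
    rintro ⟨-, hne⟩
    exact hne hfj1
  have hjmem : j ∉ insert (j+1) ((IccZ n).filter (fun i => y i ≠ i)) := by
    simp only [Finset.mem_insert, Finset.mem_filter]
    rintro (he | ⟨-, hne⟩)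
    · omega
    · exact hne hfj
  rw [Finset.card_insert_of_notMem hjmem, Finset.card_insert_of_notMem hj1mem]
  rfl

include hright hleft in
lemma demT_fix {y : Equiv.Perm ℤ} {j : ℤ} (hy : y ∈ Sgrp n) (hyi : y⁻¹ = y)
    (h1 : 1 ≤ j) (h2 : j ≤ (n:ℤ)) (hfj : y j = j) (hfj1 : y (j+1) = j+1) :
    dem (tA j) (dem y (tA j)) = y * tA j := by
  have e1 : dem y (tA j) = y * tA j := by
    rw [dem_t_right hright hy h1 h2, if_pos (by rw [hfj, hfj1]; omega)]
  rw [e1]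
  have hyt : y * tA j ∈ Sgrp n := Sgrp_mul hy (tA_mem_Sgrp h1 h2)
  rw [dem_t_left hleft hyt h1 h2, if_neg]
  rw [inv_fix hyi hfj hfj1, comm_fix hyi hfj hfj1]
  simp only [Equiv.Perm.mul_apply, tA_left, tA_right, hfj, hfj1]
  omega

include hright hleft in
lemma demT_conj {y : Equiv.Perm ℤ} {j : ℤ} (hy : y ∈ Sgrp n) (hyi : y⁻¹ = y)
    (h1 : 1 ≤ j) (h2 : j ≤ (n:ℤ)) (ha : y j < y (j+1))
    (hnb : ¬(y j = j ∧ y (j+1) = j+1)) :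
    dem (tA j) (dem y (tA j)) = tA j * y * tA j := by
  have e1 : dem y (tA j) = y * tA j := by
    rw [dem_t_right hright hy h1 h2, if_pos ha]
  rw [e1]
  have hyt : y * tA j ∈ Sgrp n := Sgrp_mul hy (tA_mem_Sgrp h1 h2)
  have hinv : (y * tA j)⁻¹ = tA j * y := by rw [mul_inv_rev, tA_inv, hyi]
  have hcond : (y * tA j)⁻¹ j < (y * tA j)⁻¹ (j+1) := by
    rw [hinv]
    simp only [Equiv.Perm.mul_apply]
    have : y j ≠ j ∨ y (j+1) ≠ j+1 := by
      by_contra hc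
      push_neg at hc
      exact hnb ⟨hc.1, hc.2⟩
    apply tA_mono ha
    rintro ⟨e1', e2'⟩
    exact hnb ⟨e1', e2'⟩
  rw [dem_t_left hleft hyt h1 h2, if_pos hcond, mul_assoc]

lemma NN_conj {n : ℕ} {y : Equiv.Perm ℤ} {j : ℤ} (hy : y ∈ Sgrp n) (hyi : y⁻¹ = y)
    (h1 : 1 ≤ j) (h2 : j ≤ (n:ℤ)) (ha : y j < y (j+1))
    (hnb : ¬(y j = j ∧ y (j+1) = j+1)) :
    NN n (tA j * y * tA j) = NN n y + 2 := by
  have hyt : y * tA j ∈ Sgrp n := Sgrp_mul hy (tA_mem_Sgrp h1 h2)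
  have e1 : NN n (y * tA j) = NN n y + 1 := NN_asc h1 h2 ha
  have hinv : (y * tA j)⁻¹ = tA j * y := by rw [mul_inv_rev, tA_inv, hyi]
  have hcond : (y * tA j)⁻¹ j < (y * tA j)⁻¹ (j+1) := by
    rw [hinv]
    simp only [Equiv.Perm.mul_apply]
    apply tA_mono ha
    rintro ⟨e1', e2'⟩
    exact hnb ⟨e1', e2'⟩
  have e2 : NN n (tA j * (y * tA j)) = NN n (y * tA j) + 1 :=
    NN_asc_left hyt h1 h2 hcond
  rw [← mul_assoc] at e2
  omega

lemma kap_conj {n : ℕ} {y : Equiv.Perm ℤ} {j : ℤ} (h1 : 1 ≤ j) (h2 : j ≤ (n:ℤ)) :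
    kap n (tA j * y * tA j) = kap n y := by
  apply Finset.card_bij' (i := fun i _ => tA j i) (j := fun i _ => tA j i)
  · intro i hi
    rw [Finset.mem_filter] at hi ⊢
    obtain ⟨hm, hne⟩ := hi
    refine ⟨tA_mem_IccZ h1 h2 hm, ?_⟩
    intro he
    apply hne
    simp only [Equiv.Perm.mul_apply]
    rw [he, tA_invol]
  · intro i hi
    rw [Finset.mem_filter] at hi ⊢
    obtain ⟨hm, hne⟩ := hi
    refine ⟨tA_mem_IccZ h1 h2 hm, ?_⟩
    intro he
    apply hne
    simp only [Equiv.Perm.mul_apply, tA_invol] at he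
    exact (tA j).injective he
  · intro i _; exact tA_invol j i
  · intro i _; exact tA_invol j i

include hright hleft in
lemma demT_desc {y : Equiv.Perm ℤ} {j : ℤ} (hy : y ∈ Sgrp n) (hyi : y⁻¹ = y)
    (h1 : 1 ≤ j) (h2 : j ≤ (n:ℤ)) (hd : y (j+1) < y j) :
    dem (tA j) (dem y (tA j)) = y := by
  have e1 : dem y (tA j) = y := by
    rw [dem_t_right hright hy h1 h2, if_neg (by omega)]
  rw [e1, dem_t_left hleft hy h1 h2, if_neg]
  rw [hyi]
  omega

include hassoc hright in
lemma dem_split {u : Equiv.Perm ℤ} {j : ℤ}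
    (hdl : dem (tA j) u = tA j * u)
    (hu : u ∈ Sgrp n) (h1 : 1 ≤ j) (h2 : j ≤ (n:ℤ))
    (hasc : u⁻¹ j < u⁻¹ (j+1)) :
    dem (tA j * u) (tA j * u)⁻¹ = dem (tA j) (dem (dem u u⁻¹) (tA j)) := by
  have hinv : (tA j * u)⁻¹ = u⁻¹ * tA j := by rw [mul_inv_rev, tA_inv]
  have e2 : dem u⁻¹ (tA j) = u⁻¹ * tA j := by
    rw [dem_t_right hright (Sgrp_inv hu) h1 h2, if_pos hasc]
  calc dem (tA j * u) (tA j * u)⁻¹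
      = dem (dem (tA j) u) (u⁻¹ * tA j) := by rw [hdl, hinv]
    _ = dem (tA j) (dem u (dem u⁻¹ (tA j))) := by rw [hassoc, e2]
    _ = dem (tA j) (dem (dem u u⁻¹) (tA j)) := by rw [hassoc]

end DemPart

end S17

namespace S17

lemma kap_one (n : ℕ) : kap n 1 = 0 := by
  rw [kap, Finset.card_eq_zero]
  ext i
  simp

section DemPart2

variable {n : ℕ} {dem : Equiv.Perm ℤ → Equiv.Perm ℤ → Equiv.Perm ℤ}
variable (hassoc : ∀ u v w, dem (dem u v) w = dem u (dem v w))
variable (hone : ∀ w, dem w 1 = w ∧ dem 1 w = w)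
variable (hright : ∀ w ∈ Sgrp n, ∀ j : ℤ, 1 ≤ j → j ≤ (n : ℤ) →
      dem w (tA j) = if lenA n (w * tA j) = lenA n w + 1 then w * tA j else w)
variable (hleft : ∀ w ∈ Sgrp n, ∀ j : ℤ, 1 ≤ j → j ≤ (n : ℤ) →
      dem (tA j) w = if lenA n (tA j * w) = lenA n w + 1 then tA j * w else w)

include hassoc hone hright hleft in
lemma demword : ∀ l : List ℤ, (∀ i ∈ l, 1 ≤ i ∧ i ≤ (n:ℤ)) →
    lenA n ((l.map tA).prod) = l.length →
    dem ((l.map tA).prod) ((l.map tA).prod)⁻¹ ∈ Sgrp n ∧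
    (dem ((l.map tA).prod) ((l.map tA).prod)⁻¹)⁻¹ =
      dem ((l.map tA).prod) ((l.map tA).prod)⁻¹ ∧
    2 * NN n (dem ((l.map tA).prod) ((l.map tA).prod)⁻¹) +
      kap n (dem ((l.map tA).prod) ((l.map tA).prod)⁻¹) ≤ 4 * l.length ∧
    (∀ j ls, l = j :: ls →
      (dem ((l.map tA).prod) ((l.map tA).prod)⁻¹) (j+1) <
      (dem ((l.map tA).prod) ((l.map tA).prod)⁻¹) j) := by
  intro l
  induction l with
  | nil =>
    intro _ _
    simp only [List.map_nil, List.prod_nil, inv_one]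
    rw [(hone 1).1]
    refine ⟨Sgrp_one, inv_one, ?_, ?_⟩
    · rw [NN_one, kap_one]; simp
    · intro j ls h; exact absurd h (by simp)
  | cons j l ih =>
    intro hlet hlen
    have h1 : 1 ≤ j := (hlet j (by simp)).1
    have h2 : j ≤ (n:ℤ) := (hlet j (by simp)).2
    have hlet' : ∀ i ∈ l, 1 ≤ i ∧ i ≤ (n:ℤ) := fun i hi => hlet i (by simp [hi])
    set u := (l.map tA).prod with hu
    have hu' : u ∈ Sgrp n := prod_mem_Sgrp l hlet'
    have hw : (((j :: l).map tA).prod) = tA j * u := by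
      rw [List.map_cons, List.prod_cons]
    have hws : tA j * u ∈ Sgrp n := Sgrp_mul (tA_mem_Sgrp h1 h2) hu'
    have hNw : NN n (tA j * u) = l.length + 1 := by
      rw [← lenA_eq_NN hws, ← hw]
      simpa using hlen
    have hle : NN n u ≤ l.length := NN_le_length l hlet'
    have hne : u⁻¹ j ≠ u⁻¹ (j+1) := fun he => by have := u⁻¹.injective he; omega
    have hasc : u⁻¹ j < u⁻¹ (j+1) := by
      rcases lt_or_gt_of_ne hne with h | h
      · exact h
      · exfalso
        have := NN_desc_left hu' h1 h2 h
        omega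
    have hNu : NN n u = l.length := by
      have := NN_asc_left hu' h1 h2 hasc
      omega
    have hlenu : lenA n u = l.length := by rw [lenA_eq_NN hu']; exact hNu
    obtain ⟨hySgrp, hyinv, hybound, -⟩ := ih hlet' hlenu
    set y := dem u u⁻¹ with hy
    have hdl : dem (tA j) u = tA j * u := by
      rw [dem_t_left hleft hu' h1 h2, if_pos hasc]
    have hsplit : dem ((((j :: l)).map tA).prod) ((((j :: l)).map tA).prod)⁻¹ =
        dem (tA j) (dem y (tA j)) := by
      rw [hw]
      exact dem_split hassoc hright hdl hu' h1 h2 hasc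
    rw [hsplit]
    have hlength : (j :: l).length = l.length + 1 := by simp
    rcases lt_trichotomy (y j) (y (j+1)) with hlt | heq | hgt
    · by_cases hb : y j = j ∧ y (j+1) = j+1
      · -- fix case
        rw [demT_fix hright hleft hySgrp hyinv h1 h2 hb.1 hb.2]
        refine ⟨Sgrp_mul hySgrp (tA_mem_Sgrp h1 h2), inv_fix hyinv hb.1 hb.2, ?_, ?_⟩
        · have e1 : NN n (y * tA j) = NN n y + 1 := NN_asc h1 h2 hlt
          have e2 := kap_fix h1 h2 hb.1 hb.2
          rw [hlength]
          omega
        · intro j' ls hcons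
          have hj' : j' = j := by injection hcons with e _; omega
          subst hj'
          simp only [Equiv.Perm.mul_apply, tA_left, tA_right, hb.1, hb.2]
          omega
      · -- conj case
        rw [demT_conj hright hleft hySgrp hyinv h1 h2 hlt hb]
        have hinvc : (tA j * y * tA j)⁻¹ = tA j * y * tA j := by
          rw [mul_inv_rev, mul_inv_rev, tA_inv, hyinv, mul_assoc]
        refine ⟨Sgrp_mul (Sgrp_mul (tA_mem_Sgrp h1 h2) hySgrp) (tA_mem_Sgrp h1 h2),
          hinvc, ?_, ?_⟩
        · have e1 := NN_conj hySgrp hyinv h1 h2 hlt hb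
          have e2 := kap_conj (y := y) h1 h2
          rw [hlength]
          omega
        · intro j' ls hcons
          have hj' : j' = j := by injection hcons with e _; omega
          subst hj'
          simp only [Equiv.Perm.mul_apply, tA_left, tA_right]
          exact tA_mono hlt (fun hpair => hb hpair)
    · exact absurd heq apply_ne
    · -- descent case
      rw [demT_desc hright hleft hySgrp hyinv h1 h2 hgt]
      refine ⟨hySgrp, hyinv, ?_, ?_⟩
      · rw [hlength]; omega
      · intro j' ls hcons
        have hj' : j' = j := by injection hcons with e _; omega
        subst hj'
        exact hgt

include hassoc hone hright hleft in
lemma lower_bound {v : Equiv.Perm ℤ} (hv : v ∈ Sgrp n) :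
    dem v v⁻¹ ∈ Sgrp n ∧ (dem v v⁻¹)⁻¹ = dem v v⁻¹ ∧
    2 * NN n (dem v v⁻¹) + kap n (dem v v⁻¹) ≤ 4 * lenA n v := by
  obtain ⟨l, hl1, hl2, hl3⟩ := word_exists (NN n v) v hv rfl
  have hlen : lenA n ((l.map tA).prod) = l.length := by
    rw [hl2, lenA_eq_NN hv, hl3]
  obtain ⟨a, b, c, -⟩ := demword hassoc hone hright hleft l hl1 hlen
  rw [hl2] at a b c
  refine ⟨a, b, ?_⟩
  rw [lenA_eq_NN hv, ← hl3]
  exact c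

end DemPart2

inductive Chain (n : ℕ) : List ℤ → Equiv.Perm ℤ → Prop
  | nil : Chain n [] 1
  | fix {l : List ℤ} {y : Equiv.Perm ℤ} (j : ℤ) : Chain n l y → 1 ≤ j → j ≤ (n:ℤ) →
      y j = j → y (j+1) = j+1 → Chain n (j :: l) (y * tA j)
  | conj {l : List ℤ} {y : Equiv.Perm ℤ} (j : ℤ) : Chain n l y → 1 ≤ j → j ≤ (n:ℤ) →
      y j < y (j+1) → ¬(y j = j ∧ y (j+1) = j+1) → Chain n (j :: l) (tA j * y * tA j)

section ChainPart

variable {n : ℕ} {dem : Equiv.Perm ℤ → Equiv.Perm ℤ → Equiv.Perm ℤ}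
variable (hassoc : ∀ u v w, dem (dem u v) w = dem u (dem v w))
variable (hone : ∀ w, dem w 1 = w ∧ dem 1 w = w)
variable (hright : ∀ w ∈ Sgrp n, ∀ j : ℤ, 1 ≤ j → j ≤ (n : ℤ) →
      dem w (tA j) = if lenA n (w * tA j) = lenA n w + 1 then w * tA j else w)
variable (hleft : ∀ w ∈ Sgrp n, ∀ j : ℤ, 1 ≤ j → j ≤ (n : ℤ) →
      dem (tA j) w = if lenA n (tA j * w) = lenA n w + 1 then tA j * w else w)

include hassoc hone hright hleft in
lemma chain_main {l : List ℤ} {z : Equiv.Perm ℤ} (hch : Chain n l z) :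
    (∀ i ∈ l, 1 ≤ i ∧ i ≤ (n:ℤ)) ∧ z ∈ Sgrp n ∧ z⁻¹ = z ∧
    2 * NN n z + kap n z = 4 * l.length ∧
    lenA n ((l.map tA).prod) = l.length ∧
    dem ((l.map tA).prod) ((l.map tA).prod)⁻¹ = z := by
  induction hch with
  | nil =>
    refine ⟨by simp, Sgrp_one, inv_one, by rw [NN_one, kap_one]; simp, ?_, ?_⟩
    · simp only [List.map_nil, List.prod_nil, List.length_nil]
      rw [lenA_eq_NN Sgrp_one, NN_one]
    · simp only [List.map_nil, List.prod_nil, inv_one]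
      exact (hone 1).1
  | @fix l y j hch h1 h2 hfj hfj1 ih =>
    obtain ⟨ihlet, ihSgrp, ihinv, ihmeas, ihlen, ihdem⟩ := ih
    set u := (l.map tA).prod with hu
    have hu' : u ∈ Sgrp n := prod_mem_Sgrp l ihlet
    have hNu : NN n u = l.length := by rw [← lenA_eq_NN hu']; exact ihlen
    have hasc : u⁻¹ j < u⁻¹ (j+1) := by
      have hne : u⁻¹ j ≠ u⁻¹ (j+1) := fun he => by have := u⁻¹.injective he; omega
      rcases lt_or_gt_of_ne hne with h | h
      · exact h
      exfalso
      have hNtu : NN n (tA j * u) + 1 = NN n u := NN_desc_left hu' h1 h2 h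
      have htus : tA j * u ∈ Sgrp n := Sgrp_mul (tA_mem_Sgrp h1 h2) hu'
      obtain ⟨l0, hl01, hl02, hl03⟩ := word_exists (NN n (tA j * u)) (tA j * u) htus rfl
      have hlet1 : ∀ i ∈ (j :: l0), 1 ≤ i ∧ i ≤ (n:ℤ) := by
        intro i hi
        rcases List.mem_cons.mp hi with rfl | hi'
        · exact ⟨h1, h2⟩
        · exact hl01 i hi'
      have hprod : (((j :: l0)).map tA).prod = u := by
        rw [List.map_cons, List.prod_cons, hl02, ← mul_assoc, tA_mul_self, one_mul]
      have hlen1 : lenA n ((((j :: l0)).map tA).prod) = (j :: l0).length := by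
        rw [hprod, lenA_eq_NN hu']
        simp only [List.length_cons]
        omega
      obtain ⟨-, -, -, hdesc⟩ := demword hassoc hone hright hleft (j :: l0) hlet1 hlen1
      have := hdesc j l0 rfl
      rw [hprod, ihdem] at this
      rw [hfj, hfj1] at this
      omega
    have hNtu : NN n (tA j * u) = NN n u + 1 := NN_asc_left hu' h1 h2 hasc
    have htus : tA j * u ∈ Sgrp n := Sgrp_mul (tA_mem_Sgrp h1 h2) hu'
    have hdl : dem (tA j) u = tA j * u := by
      rw [dem_t_left hleft hu' h1 h2, if_pos hasc]
    have hsplit := dem_split hassoc hright hdl hu' h1 h2 hasc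
    rw [ihdem] at hsplit
    have hdem2 : dem (tA j) (dem y (tA j)) = y * tA j :=
      demT_fix hright hleft ihSgrp ihinv h1 h2 hfj hfj1
    refine ⟨?_, Sgrp_mul ihSgrp (tA_mem_Sgrp h1 h2), inv_fix ihinv hfj hfj1, ?_, ?_, ?_⟩
    · intro i hi
      rcases List.mem_cons.mp hi with rfl | hi'
      · exact ⟨h1, h2⟩
      · exact ihlet i hi'
    · have e1 : NN n (y * tA j) = NN n y + 1 := NN_asc h1 h2 (by rw [hfj, hfj1]; omega)
      have e2 := kap_fix h1 h2 hfj hfj1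
      simp only [List.length_cons]
      omega
    · rw [List.map_cons, List.prod_cons, ← hu, lenA_eq_NN htus, hNtu, hNu]
      simp
    · rw [List.map_cons, List.prod_cons, ← hu, hsplit, hdem2]
  | @conj l y j hch h1 h2 hlt hnb ih =>
    obtain ⟨ihlet, ihSgrp, ihinv, ihmeas, ihlen, ihdem⟩ := ih
    set u := (l.map tA).prod with hu
    have hu' : u ∈ Sgrp n := prod_mem_Sgrp l ihlet
    have hNu : NN n u = l.length := by rw [← lenA_eq_NN hu']; exact ihlen
    have hasc : u⁻¹ j < u⁻¹ (j+1) := by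
      have hne : u⁻¹ j ≠ u⁻¹ (j+1) := fun he => by have := u⁻¹.injective he; omega
      rcases lt_or_gt_of_ne hne with h | h
      · exact h
      exfalso
      have hNtu : NN n (tA j * u) + 1 = NN n u := NN_desc_left hu' h1 h2 h
      have htus : tA j * u ∈ Sgrp n := Sgrp_mul (tA_mem_Sgrp h1 h2) hu'
      obtain ⟨l0, hl01, hl02, hl03⟩ := word_exists (NN n (tA j * u)) (tA j * u) htus rfl
      have hlet1 : ∀ i ∈ (j :: l0), 1 ≤ i ∧ i ≤ (n:ℤ) := by
        intro i hi
        rcases List.mem_cons.mp hi with rfl | hi'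
        · exact ⟨h1, h2⟩
        · exact hl01 i hi'
      have hprod : (((j :: l0)).map tA).prod = u := by
        rw [List.map_cons, List.prod_cons, hl02, ← mul_assoc, tA_mul_self, one_mul]
      have hlen1 : lenA n ((((j :: l0)).map tA).prod) = (j :: l0).length := by
        rw [hprod, lenA_eq_NN hu']
        simp only [List.length_cons]
        omega
      obtain ⟨-, -, -, hdesc⟩ := demword hassoc hone hright hleft (j :: l0) hlet1 hlen1
      have := hdesc j l0 rfl
      rw [hprod, ihdem] at this
      omega
    have hNtu : NN n (tA j * u) = NN n u + 1 := NN_asc_left hu' h1 h2 hasc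
    have htus : tA j * u ∈ Sgrp n := Sgrp_mul (tA_mem_Sgrp h1 h2) hu'
    have hdl : dem (tA j) u = tA j * u := by
      rw [dem_t_left hleft hu' h1 h2, if_pos hasc]
    have hsplit := dem_split hassoc hright hdl hu' h1 h2 hasc
    rw [ihdem] at hsplit
    have hdem2 : dem (tA j) (dem y (tA j)) = tA j * y * tA j :=
      demT_conj hright hleft ihSgrp ihinv h1 h2 hlt hnb
    have hinvc : (tA j * y * tA j)⁻¹ = tA j * y * tA j := by
      rw [mul_inv_rev, mul_inv_rev, tA_inv, ihinv, mul_assoc]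
    refine ⟨?_, Sgrp_mul (Sgrp_mul (tA_mem_Sgrp h1 h2) ihSgrp) (tA_mem_Sgrp h1 h2),
      hinvc, ?_, ?_, ?_⟩
    · intro i hi
      rcases List.mem_cons.mp hi with rfl | hi'
      · exact ⟨h1, h2⟩
      · exact ihlet i hi'
    · have e1 := NN_conj ihSgrp ihinv h1 h2 hlt hnb
      have e2 := kap_conj (y := y) (n := n) h1 h2
      simp only [List.length_cons]
      omega
    · rw [List.map_cons, List.prod_cons, ← hu, lenA_eq_NN htus, hNtu, hNu]
      simp
    · rw [List.map_cons, List.prod_cons, ← hu, hsplit, hdem2]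

end ChainPart

end S17

namespace S17

lemma dedupFirst_cons (a : ℤ) (l : List ℤ) :
    dedupFirst (a :: l) = a :: (dedupFirst l).filter (fun x => x != a) := rfl

lemma mem_dedupFirst {x : ℤ} : ∀ {l : List ℤ}, x ∈ dedupFirst l ↔ x ∈ l := by
  intro l
  induction l with
  | nil => simp [dedupFirst]
  | cons a l ih =>
    rw [dedupFirst_cons]
    simp only [List.mem_cons, List.mem_filter, bne_iff_ne]
    constructor
    · rintro (rfl | ⟨hm, hne⟩)
      · exact Or.inl rfl
      · exact Or.inr (ih.mp hm)
    · rintro (rfl | hm)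
      · exact Or.inl rfl
      · rcases eq_or_ne x a with rfl | hne
        · exact Or.inl rfl
        · exact Or.inr ⟨ih.mpr hm, hne⟩

lemma nodup_dedupFirst : ∀ {l : List ℤ}, (dedupFirst l).Nodup := by
  intro l
  induction l with
  | nil => simp [dedupFirst]
  | cons a l ih =>
    rw [dedupFirst_cons]
    refine List.Nodup.cons ?_ (ih.filter _)
    intro hmem
    have := (List.mem_filter.mp hmem).2
    simp at this

lemma dedupFirst_map {f : ℤ → ℤ} (hf : Function.Injective f) :
    ∀ (l : List ℤ), dedupFirst (l.map f) = (dedupFirst l).map f := by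
  intro l
  induction l with
  | nil => simp [dedupFirst]
  | cons a l ih =>
    rw [List.map_cons, dedupFirst_cons, dedupFirst_cons, ih, List.map_cons,
      List.filter_map]
    congr 1
    congr 1
    apply List.filter_congr
    intro x _
    show (f x != f a) = (x != a)
    simp [bne, hf.eq_iff]

lemma dedupFirst_congr_cons {l l' : List ℤ} (a : ℤ) (h : dedupFirst l = dedupFirst l') :
    dedupFirst (a :: l) = dedupFirst (a :: l') := by
  rw [dedupFirst_cons, dedupFirst_cons, h]

lemma dedupFirst_congr_append {l l' : List ℤ} (h : dedupFirst l = dedupFirst l') :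
    ∀ xs : List ℤ, dedupFirst (xs ++ l) = dedupFirst (xs ++ l') := by
  intro xs
  induction xs with
  | nil => simpa using h
  | cons a xs ih => exact dedupFirst_congr_cons a ih

lemma dedupFirst_cons_cons (a : ℤ) (l : List ℤ) :
    dedupFirst (a :: a :: l) = dedupFirst (a :: l) := by
  rw [dedupFirst_cons, dedupFirst_cons]
  congr 1
  rw [List.filter_cons]
  simp [List.filter_filter]

lemma dedupFirst_of_nodup : ∀ {l : List ℤ}, l.Nodup → dedupFirst l = l := by
  intro l
  induction l with
  | nil => intro _; rfl
  | cons a l ih =>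
    intro h
    rw [dedupFirst_cons, ih h.of_cons]
    congr 1
    apply List.filter_eq_self.mpr
    intro x hx
    simp only [bne_iff_ne, ne_eq, decide_eq_true_eq]
    intro he
    subst he
    exact (List.nodup_cons.mp h).1 hx

lemma toFinset_dedupFirst (l : List ℤ) : (dedupFirst l).toFinset = l.toFinset := by
  ext x
  simp [List.mem_toFinset, mem_dedupFirst]

lemma length_dedupFirst (l : List ℤ) : (dedupFirst l).length = l.toFinset.card := by
  rw [← toFinset_dedupFirst, List.toFinset_card_of_nodup nodup_dedupFirst]

/-- the canonical list 1, 2, ..., n+1 -/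
def LL (n : ℕ) : List ℤ := (List.range (n+1)).map (fun k : ℕ => (k:ℤ)+1)

lemma LL_pairwise (n : ℕ) : (LL n).Pairwise (· < ·) := by
  rw [LL, List.pairwise_map]
  apply List.pairwise_lt_range.imp
  intro a b h
  show (a:ℤ) + 1 < (b:ℤ) + 1
  omega

lemma LL_sorted (n : ℕ) : (LL n).Pairwise (· ≤ ·) := (LL_pairwise n).imp le_of_lt

lemma LL_nodup (n : ℕ) : (LL n).Nodup := (LL_pairwise n).imp ne_of_lt

lemma mem_LL {n : ℕ} {x : ℤ} : x ∈ LL n ↔ 1 ≤ x ∧ x ≤ (n:ℤ)+1 := by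
  rw [LL]
  constructor
  · intro hx
    obtain ⟨k, hk, he⟩ := List.mem_map.mp hx
    rw [List.mem_range] at hk
    have he' : (k:ℤ) + 1 = x := he
    omega
  · rintro ⟨h1, h2⟩
    apply List.mem_map.mpr
    refine ⟨(x-1).toNat, List.mem_range.mpr (by omega), ?_⟩
    show ((x-1).toNat : ℤ) + 1 = x
    omega

lemma sort_filter_eq (n : ℕ) (p : ℤ → Prop) [DecidablePred p] :
    ((IccZ n).filter p).sort (· ≤ ·) = (LL n).filter (fun x => decide (p x)) := by
  refine List.Perm.eq_of_pairwise' (Finset.pairwise_sort _ _) ((LL_sorted n).filter _) ?_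
  apply List.perm_of_nodup_nodup_toFinset_eq (Finset.sort_nodup _ _)
    ((LL_nodup n).filter _)
  ext x
  simp only [List.mem_toFinset, Finset.mem_sort, Finset.mem_filter, List.mem_filter,
    mem_LL, decide_eq_true_eq, mem_IccZ]
  try tauto

lemma foldr_eq_flatMap (z : Equiv.Perm ℤ) : ∀ l : List ℤ,
    l.foldr (fun b acc => b :: z b :: acc) [] = l.flatMap (fun b => [b, z b]) := by
  intro l
  induction l with
  | nil => rfl
  | cons a l ih => simp [List.flatMap_cons, ih]

lemma cycWordDes_eq (n : ℕ) (z : Equiv.Perm ℤ) :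
    cycWordDes n z = ((LL n).filter (fun x => decide (z x ≤ x))).flatMap
      (fun b => [b, z b]) := by
  rw [cycWordDes, foldr_eq_flatMap]
  congr 1
  exact sort_filter_eq n (fun b => z b ≤ b)

end S17

namespace S17

lemma zz_id {z : Equiv.Perm ℤ} (hzi : z⁻¹ = z) (x : ℤ) : z (z x) = x := by
  nth_rewrite 1 [← hzi]
  exact Equiv.symm_apply_apply z x

lemma mem_cycWordDes {n : ℕ} {z : Equiv.Perm ℤ} (hz : z ∈ Sgrp n) (hzi : z⁻¹ = z)
    {x : ℤ} : x ∈ cycWordDes n z ↔ x ∈ IccZ n := by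
  rw [cycWordDes_eq]
  simp only [List.mem_flatMap, List.mem_filter, List.mem_cons, List.not_mem_nil,
    or_false, decide_eq_true_eq]
  constructor
  · rintro ⟨b, ⟨hbL, hble⟩, hx | hx⟩
    · subst hx; exact mem_IccZ.mpr (mem_LL.mp hbL)
    · subst hx
      exact Sgrp_maps hz (mem_IccZ.mpr (mem_LL.mp hbL))
  · intro hx
    by_cases hc : z x ≤ x
    · exact ⟨x, ⟨mem_LL.mpr (mem_IccZ.mp hx), hc⟩, Or.inl rfl⟩
    · refine ⟨z x, ⟨mem_LL.mpr (mem_IccZ.mp (Sgrp_maps hz hx)), ?_⟩, Or.inr ?_⟩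
      · rw [zz_id hzi]; omega
      · rw [zz_id hzi]

lemma IccZ_card (n : ℕ) : (IccZ n).card = n + 1 := by
  rw [IccZ, Int.card_Icc]
  omega

lemma length_W {n : ℕ} {z : Equiv.Perm ℤ} (hz : z ∈ Sgrp n) (hzi : z⁻¹ = z) :
    (dedupFirst (cycWordDes n z)).length = n + 1 := by
  rw [length_dedupFirst]
  have : (cycWordDes n z).toFinset = IccZ n := by
    ext x
    rw [List.mem_toFinset, mem_cycWordDes hz hzi]
  rw [this, IccZ_card]

lemma getD_map_tA {l : List ℤ} {j : ℤ} {k : ℕ} (hk : k < l.length) :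
    (l.map (tA j)).getD k 0 = tA j (l.getD k 0) := by
  rw [List.getD_eq_getElem _ _ (by simpa using hk), List.getD_eq_getElem _ _ hk,
    List.getElem_map]

lemma dedup_flatMap_pairs : ∀ l : List ℤ,
    dedupFirst (l.flatMap (fun b => [b, b])) = dedupFirst l := by
  intro l
  induction l with
  | nil => rfl
  | cons a l ih =>
    rw [List.flatMap_cons]
    show dedupFirst (a :: a :: l.flatMap (fun b => [b, b])) = dedupFirst (a :: l)
    rw [dedupFirst_cons_cons]
    exact dedupFirst_congr_cons a ih

lemma W_one (n : ℕ) : dedupFirst (cycWordDes n 1) = LL n := by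
  rw [cycWordDes_eq]
  have h1 : (LL n).filter (fun x => decide ((1 : Equiv.Perm ℤ) x ≤ x)) = LL n := by
    apply List.filter_eq_self.mpr
    intro x _
    simp
  rw [h1]
  have h2 : (LL n).flatMap (fun b => [b, (1 : Equiv.Perm ℤ) b]) =
      (LL n).flatMap (fun b => [b, b]) := by
    apply List.flatMap_congr
    intro x _
    simp
  rw [h2, dedup_flatMap_pairs]
  exact dedupFirst_of_nodup (LL_nodup n)

lemma getD_LL {n : ℕ} {k : ℕ} (hk : k < n + 1) : (LL n).getD k 0 = (k:ℤ) + 1 := by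
  have hlen : (LL n).length = n + 1 := by simp [LL]
  rw [List.getD_eq_getElem _ _ (by omega)]
  show ((List.range (n+1)).map (fun k : ℕ => (k:ℤ)+1))[k]'(by simpa [LL] using hk) = _
  rw [List.getElem_map]
  congr 1
  simp [List.getElem_range]

end S17

namespace S17

lemma map_tA_pairwise {j : ℤ} : ∀ {l : List ℤ}, l.Pairwise (· < ·) →
    (∀ x ∈ l, x ≠ j) → (l.map (tA j)).Pairwise (· < ·) := by
  intro l
  induction l with
  | nil => simp
  | cons a l ih =>
    intro hp hj
    rw [List.map_cons]
    rw [List.pairwise_cons] at hp ⊢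
    obtain ⟨ha, hp⟩ := hp
    refine ⟨?_, ih hp (fun x hx => hj x (by simp [hx]))⟩
    intro b hb
    obtain ⟨y, hy, rfl⟩ := List.mem_map.mp hb
    exact tA_mono' (ha y hy) (hj a (by simp))

lemma tA_mem_LL {n : ℕ} {j x : ℤ} (h1 : 1 ≤ j) (h2 : j ≤ (n:ℤ)) :
    tA j x ∈ LL n ↔ x ∈ LL n := by
  constructor
  · intro h
    have := tA_mem_IccZ h1 h2 (mem_IccZ.mpr (mem_LL.mp h))
    rw [tA_invol] at this
    exact mem_LL.mpr (mem_IccZ.mp this)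
  · intro h
    exact mem_LL.mpr (mem_IccZ.mp (tA_mem_IccZ h1 h2 (mem_IccZ.mpr (mem_LL.mp h))))

lemma word_conj {n : ℕ} {z : Equiv.Perm ℤ} {j : ℤ} (hzi : z⁻¹ = z)
    (h1 : 1 ≤ j) (h2 : j ≤ (n:ℤ))
    (hjnot : ¬ (z j ≤ j)) (hzj : z j ≠ j + 1) (hzj1 : z (j+1) ≠ j) :
    cycWordDes n (tA j * z * tA j) = (cycWordDes n z).map (tA j) := by
  set z' := tA j * z * tA j with hz'
  have hz'app : ∀ x, z' x = tA j (z (tA j x)) := by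
    intro x; simp [hz', Equiv.Perm.mul_apply]
  have key1 : ∀ u : ℤ, z u ≤ u ↔ tA j (z u) ≤ tA j u := by
    intro u
    rcases lt_trichotomy (z u) u with hlt | heq | hgt
    · constructor
      · intro _
        have : tA j (z u) < tA j u := by
          apply tA_mono hlt
          rintro ⟨e1, e2⟩
          rw [e2] at e1
          exact hzj1 e1
        omega
      · intro _; omega
    · rw [heq]
      simp
    · constructor
      · intro h; omega
      · intro h
        exfalso
        have : tA j u < tA j (z u) := by
          apply tA_mono hgt
          rintro ⟨e1, e2⟩
          rw [e1] at e2
          exact hzj e2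
        omega
  have key2 : ∀ x : ℤ, z' x ≤ x ↔ z (tA j x) ≤ tA j x := by
    intro x
    rw [hz'app]
    have h := key1 (tA j x)
    rw [tA_invol] at h
    exact h.symm
  -- the filtered lists
  have hmemne : ∀ x ∈ (LL n).filter (fun x => decide (z x ≤ x)), x ≠ j := by
    intro x hx he
    subst he
    exact hjnot (of_decide_eq_true (List.mem_filter.mp hx).2)
  have hF : (LL n).filter (fun x => decide (z' x ≤ x)) =
      ((LL n).filter (fun x => decide (z x ≤ x))).map (tA j) := by
    refine (fun hp hs => List.Perm.eq_of_pairwise' ((LL_sorted n).filter _) hs hp) ?_ ?_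
    · apply List.perm_of_nodup_nodup_toFinset_eq ((LL_nodup n).filter _)
        (((LL_nodup n).filter _).map (tA j).injective)
      ext x
      simp only [List.mem_toFinset, List.mem_filter, List.mem_map,
        decide_eq_true_eq]
      constructor
      · rintro ⟨hxL, hx⟩
        refine ⟨tA j x, ⟨?_, ?_⟩, tA_invol j x⟩
        · exact (tA_mem_LL h1 h2).mpr hxL
        · have := (key2 x).mp hx
          exact this
      · rintro ⟨y, ⟨hyL, hy⟩, rfl⟩
        refine ⟨(tA_mem_LL h1 h2).mpr hyL, ?_⟩
        apply (key2 (tA j y)).mpr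
        rwa [tA_invol]
    · apply List.Pairwise.imp le_of_lt
      exact map_tA_pairwise ((LL_pairwise n).filter _) hmemne
  rw [cycWordDes_eq, cycWordDes_eq, hF, List.flatMap_map, List.map_flatMap]
  apply List.flatMap_congr
  intro b _
  show [tA j b, z' (tA j b)] = [tA j b, tA j (z b)]
  rw [hz'app, tA_invol]

end S17

namespace S17

lemma word_fix {n : ℕ} {z : Equiv.Perm ℤ} {a : ℤ} (hz : z ∈ Sgrp n) (hzi : z⁻¹ = z)
    (h1 : 1 ≤ a) (h2 : a ≤ (n:ℤ)) (hza : z a = a + 1) :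
    dedupFirst (cycWordDes n z) = (dedupFirst (cycWordDes n (z * tA a))).map (tA a) := by
  have hza1 : z (a+1) = a := by
    have := zz_id hzi a
    rw [hza] at this
    exact this
  set z' := z * tA a with hz'
  have hz'a : z' a = a := by
    show z (tA a a) = a
    rw [tA_left, hza1]
  have hz'a1 : z' (a+1) = a+1 := by
    show z (tA a (a+1)) = a+1
    rw [tA_right, hza]
  have hz'o : ∀ x, x ≠ a → x ≠ a+1 → z' x = z x := by
    intro x hx1 hx2
    show z (tA a x) = z x
    rw [tA_other a x hx1 hx2]
  obtain ⟨L1, L2, hLL, hL1, hL2⟩ : ∃ L1 L2 : List ℤ, LL n = L1 ++ a :: (a+1) :: L2 ∧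
      (∀ x ∈ L1, x < a) ∧ (∀ x ∈ L2, a + 1 < x) := by
    set m := (a-1).toNat with hmdef
    have hm : (m:ℤ) = a - 1 := by omega
    have hmn : m + 2 ≤ n + 1 := by omega
    refine ⟨(List.range m).map (fun k : ℕ => (k:ℤ)+1),
        (List.range (n+1-(m+2))).map (fun k : ℕ => ((m+2+k : ℕ):ℤ)+1), ?_, ?_, ?_⟩
    · have hr : n+1 = m+2 + (n+1-(m+2)) := by omega
      set r := n+1-(m+2) with hrdef
      rw [LL, hr, List.range_add, List.map_append]
      rw [show (List.map (fun k : ℕ => (k:ℤ)+1) (List.range m)) ++ a :: (a+1) ::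
          (List.map (fun k : ℕ => ((m+2+k : ℕ):ℤ)+1) (List.range r)) =
          ((List.map (fun k : ℕ => (k:ℤ)+1) (List.range m)) ++ [a, a+1]) ++
          (List.map (fun k : ℕ => ((m+2+k : ℕ):ℤ)+1) (List.range r)) by
        rw [List.append_assoc]
        rfl]
      congr 1
      · rw [show m+2 = (m+1)+1 by omega, List.range_succ, List.range_succ,
          List.map_append, List.map_append, List.append_assoc]
        congr 1
        show List.map (fun k : ℕ => (k:ℤ)+1) [m] ++ List.map (fun k : ℕ => (k:ℤ)+1) [m+1] = [a, a+1]
        simp only [List.map_cons, List.map_nil]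
        have e1 : (m:ℤ)+1 = a := by omega
        have e2 : ((m+1 : ℕ):ℤ)+1 = a+1 := by push_cast; omega
        rw [e1, e2]
        rfl
      · rw [List.map_map]
        apply List.map_congr_left
        intro k _
        show ((m+2+k : ℕ):ℤ) + 1 = ((m+2)+k : ℕ) + 1
        norm_num
    · intro x hx
      obtain ⟨k, hk, he⟩ := List.mem_map.mp hx
      rw [List.mem_range] at hk
      have he' : (k:ℤ)+1 = x := he
      omega
    · intro x hx
      obtain ⟨k, hk, he⟩ := List.mem_map.mp hx
      have he' : ((m+2+k : ℕ):ℤ)+1 = x := he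
      push_cast at he'
      omega
  have hL1ne : ∀ x ∈ L1, x ≠ a ∧ x ≠ a + 1 := by
    intro x hx
    have := hL1 x hx
    omega
  have hL2ne : ∀ x ∈ L2, x ≠ a ∧ x ≠ a + 1 := by
    intro x hx
    have := hL2 x hx
    omega
  set pz : ℤ → Bool := fun x => decide (z x ≤ x) with hpz
  set pz' : ℤ → Bool := fun x => decide (z' x ≤ x) with hpz'
  have hfilter_eq : ∀ L : List ℤ, (∀ x ∈ L, x ≠ a ∧ x ≠ a+1) →
      L.filter pz' = L.filter pz := by
    intro L hL
    apply List.filter_congr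
    intro x hx
    rw [hpz, hpz']
    simp only [hz'o x (hL x hx).1 (hL x hx).2]
  have hfz : (LL n).filter pz = L1.filter pz ++ (a+1) :: L2.filter pz := by
    rw [hLL, List.filter_append, List.filter_cons, List.filter_cons]
    have e1 : pz a = false := by
      rw [hpz]
      simp only [hza, decide_eq_false_iff_not]
      omega
    have e2 : pz (a+1) = true := by
      rw [hpz]
      simp only [hza1, decide_eq_true_eq]
      omega
    rw [e1, e2]
    simp
  have hfz' : (LL n).filter pz' = L1.filter pz ++ a :: (a+1) :: L2.filter pz := by
    rw [hLL, List.filter_append, List.filter_cons, List.filter_cons]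
    have e1 : pz' a = true := by
      rw [hpz']
      simp only [hz'a, decide_eq_true_eq]
      omega
    have e2 : pz' (a+1) = true := by
      rw [hpz']
      simp only [hz'a1, decide_eq_true_eq]
      omega
    rw [e1, e2, hfilter_eq L1 hL1ne, hfilter_eq L2 hL2ne]
    simp
  set F1 := L1.filter pz with hF1
  set F2 := L2.filter pz with hF2
  have hF1mem : ∀ b ∈ F1, b < a := fun b hb => hL1 b (List.mem_filter.mp hb).1
  have hF2mem : ∀ b ∈ F2, a + 1 < b := fun b hb => hL2 b (List.mem_filter.mp hb).1
  set A1 := F1.flatMap (fun b => [b, z b]) with hA1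
  set A2 := F2.flatMap (fun b => [b, z b]) with hA2
  have hword : cycWordDes n z = A1 ++ (a+1) :: a :: A2 := by
    rw [cycWordDes_eq, hfz, List.flatMap_append, List.flatMap_cons, hza1]
    rfl
  have hA1' : F1.flatMap (fun b => [b, z' b]) = A1 := by
    rw [hA1]
    apply List.flatMap_congr
    intro b hb
    have hblt := hF1mem b hb
    rw [hz'o b (by omega) (by omega)]
  have hA2' : F2.flatMap (fun b => [b, z' b]) = A2 := by
    rw [hA2]
    apply List.flatMap_congr
    intro b hb
    have hblt := hF2mem b hb
    rw [hz'o b (by omega) (by omega)]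
  have hword' : cycWordDes n z' = A1 ++ a :: a :: (a+1) :: (a+1) :: A2 := by
    rw [cycWordDes_eq, hfz', List.flatMap_append, List.flatMap_cons, List.flatMap_cons,
      hz'a, hz'a1, hA1']
    rw [hA2']
    rfl
  -- letters of A1 and A2 are fixed by tA a
  have hA1fix : ∀ x ∈ A1, tA a x = x := by
    intro x hx
    obtain ⟨b, hb, hxb⟩ := List.mem_flatMap.mp hx
    have hblt := hF1mem b hb
    have hzb : z b ≤ b := of_decide_eq_true (List.mem_filter.mp hb).2
    simp only [List.mem_cons, List.not_mem_nil, or_false] at hxb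
    rcases hxb with rfl | rfl
    · exact tA_other a x (by omega) (by omega)
    · exact tA_other a (z b) (by omega) (by omega)
  have hA2fix : ∀ x ∈ A2, tA a x = x := by
    intro x hx
    obtain ⟨b, hb, hxb⟩ := List.mem_flatMap.mp hx
    have hbgt := hF2mem b hb
    simp only [List.mem_cons, List.not_mem_nil, or_false] at hxb
    have hzb1 : z b ≠ a := by
      intro he
      have : z (z b) = z a := by rw [he]
      rw [zz_id hzi, hza] at this
      omega
    have hzb2 : z b ≠ a + 1 := by
      intro he
      have : z (z b) = z (a+1) := by rw [he]
      rw [zz_id hzi, hza1] at this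
      omega
    rcases hxb with rfl | rfl
    · exact tA_other a x (by omega) (by omega)
    · exact tA_other a (z b) hzb1 hzb2
  rw [hword, hword', ← dedupFirst_map (tA a).injective]
  have hmap : (A1 ++ a :: a :: (a+1) :: (a+1) :: A2).map (tA a) =
      A1 ++ (a+1) :: (a+1) :: a :: a :: A2 := by
    rw [List.map_append]
    congr 1
    · rw [List.map_congr_left hA1fix, List.map_id']
    · simp only [List.map_cons, tA_left, tA_right]
      rw [List.map_congr_left hA2fix, List.map_id']
  rw [hmap]
  apply dedupFirst_congr_append _ A1
  rw [dedupFirst_cons_cons (a+1)]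
  exact dedupFirst_congr_cons (a+1) (dedupFirst_cons_cons a A2).symm

end S17

namespace S17

lemma moved_mem {n : ℕ} {z : Equiv.Perm ℤ} (hz : z ∈ Sgrp n) {x : ℤ} (hx : z x ≠ x) :
    x ∈ IccZ n := by
  rw [mem_IccZ]
  by_contra h
  exact hx (hz x (by omega))

lemma comm_cycle {z : Equiv.Perm ℤ} {a : ℤ} (hzi : z⁻¹ = z) (hza : z a = a + 1) :
    z * tA a = tA a * z := by
  have hza1 : z (a+1) = a := by
    have := zz_id hzi a
    rw [hza] at this
    exact this
  apply Equiv.ext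
  intro x
  simp only [Equiv.Perm.mul_apply]
  rcases eq_or_ne x a with rfl | hx1
  · rw [tA_left, hza1, hza, tA_right]
  rcases eq_or_ne x (a+1) with rfl | hx2
  · rw [tA_right, hza, hza1, tA_left]
  rw [tA_other a x hx1 hx2]
  have h1 : z x ≠ a := by
    intro he
    have := congrArg z he
    rw [zz_id hzi, hza] at this
    omega
  have h2 : z x ≠ a + 1 := by
    intro he
    have := congrArg z he
    rw [zz_id hzi, hza1] at this
    exact hx1 this
  rw [tA_other a (z x) h1 h2]

lemma step_lemma {n : ℕ} {z : Equiv.Perm ℤ} (hz : z ∈ Sgrp n) (hzi : z⁻¹ = z)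
    (hne : z ≠ 1) :
    ∃ (j : ℤ) (z' : Equiv.Perm ℤ), 1 ≤ j ∧ j ≤ (n:ℤ) ∧ z' ∈ Sgrp n ∧ z'⁻¹ = z' ∧
      2 * NN n z' + kap n z' + 4 = 2 * NN n z + kap n z ∧
      dedupFirst (cycWordDes n z) = (dedupFirst (cycWordDes n z')).map (tA j) ∧
      ((z' j = j ∧ z' (j+1) = j+1 ∧ z = z' * tA j) ∨
       (z' j < z' (j+1) ∧ ¬(z' j = j ∧ z' (j+1) = j+1) ∧ z = tA j * z' * tA j)) := by
  -- minimal moved point c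
  have hmoved : ∃ x, z x ≠ x := by
    by_contra h
    push_neg at h
    exact hne (Equiv.ext fun x => h x)
  set M := (IccZ n).filter (fun i => z i ≠ i) with hM
  have hMne : M.Nonempty := by
    obtain ⟨x, hx⟩ := hmoved
    exact ⟨x, Finset.mem_filter.mpr ⟨moved_mem hz hx, hx⟩⟩
  set c := M.min' hMne with hc
  have hcM := M.min'_mem hMne
  rw [Finset.mem_filter] at hcM
  obtain ⟨hcIcc, hcmoved⟩ := hcM
  rw [← hc] at hcIcc hcmoved
  have hcmin : ∀ e, z e ≠ e → c ≤ e := by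
    intro e he
    exact M.min'_le e (Finset.mem_filter.mpr ⟨moved_mem hz he, he⟩)
  have hzc : c < z c := by
    rcases lt_trichotomy (z c) c with h | h | h
    · exfalso
      have h2 : z (z c) ≠ z c := by rw [zz_id hzi]; omega
      have := hcmin (z c) h2
      omega
    · exact absurd h hcmoved
    · exact h
  -- minimal b
  set B := (IccZ n).filter (fun i => c ≤ i ∧ z i ≤ i) with hB
  have hBne : B.Nonempty := by
    refine ⟨z c, Finset.mem_filter.mpr ⟨?_, by omega, ?_⟩⟩
    · exact moved_mem hz (by rw [zz_id hzi]; omega)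
    · rw [zz_id hzi]; omega
  set b := B.min' hBne with hbdef
  have hbB := B.min'_mem hBne
  rw [Finset.mem_filter] at hbB
  obtain ⟨hbIcc, hcb, hzb⟩ := hbB
  rw [← hbdef] at hbIcc hcb hzb
  have hbmin : ∀ e, e ∈ IccZ n → c ≤ e → z e ≤ e → b ≤ e := by
    intro e h1 h2 h3
    exact B.min'_le e (Finset.mem_filter.mpr ⟨h1, h2, h3⟩)
  have hcbne : c < b := by
    rcases eq_or_lt_of_le hcb with he | h
    · exfalso
      rw [← he] at hzb
      omega
    · exact h
  have hbIcc' := mem_IccZ.mp hbIcc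
  have hcIcc' := mem_IccZ.mp hcIcc
  have p4 : ∀ e, c ≤ e → e < b → e ≠ z b → b < z e := by
    intro e h1 h2 h3
    have heIcc : e ∈ IccZ n := mem_IccZ.mpr ⟨by omega, by omega⟩
    have hez : ¬ (z e ≤ e) := by
      intro hc2
      have := hbmin e heIcc h1 hc2
      omega
    push_neg at hez
    have hze_moved : z (z e) ≠ z e := by rw [zz_id hzi]; omega
    have hzeIcc : z e ∈ IccZ n := moved_mem hz hze_moved
    have hcze : c ≤ z e := hcmin (z e) hze_moved
    have hble : b ≤ z e := hbmin (z e) hzeIcc hcze (by rw [zz_id hzi]; omega)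
    rcases eq_or_lt_of_le hble with he | h
    · exfalso
      apply h3
      rw [he, zz_id hzi]
    · exact h
  by_cases hS2 : z b < b ∧ b = z b + 1
  · -- fix case, j = a = z b
    obtain ⟨hab, hadj⟩ := hS2
    set a := z b with ha
    have hza : z a = a + 1 := by
      rw [ha, zz_id hzi]
      omega
    have haIcc : a ∈ IccZ n := moved_mem hz (by rw [hza]; omega)
    have haIcc' := mem_IccZ.mp haIcc
    have h1 : (1:ℤ) ≤ a := by omega
    have h2 : a ≤ (n:ℤ) := by omega
    set z' := z * tA a with hz'def
    have hz'a : z' a = a := by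
      show z (tA a a) = a
      rw [tA_left, ← hza, zz_id hzi]
    have hz'a1 : z' (a+1) = a+1 := by
      show z (tA a (a+1)) = a+1
      rw [tA_right, hza]
    have hcomm := comm_cycle hzi hza
    have hz'inv : z'⁻¹ = z' := by
      rw [hz'def, mul_inv_rev, tA_inv, hzi, hcomm]
    have hz'S : z' ∈ Sgrp n := Sgrp_mul hz (tA_mem_Sgrp h1 h2)
    have hzz' : z = z' * tA a := by
      rw [hz'def, mul_assoc, tA_mul_self, mul_one]
    refine ⟨a, z', h1, h2, hz'S, hz'inv, ?_, ?_, Or.inl ⟨hz'a, hz'a1, hzz'⟩⟩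
    · have e1 : NN n z = NN n z' + 1 := by
        rw [hzz']
        exact NN_asc h1 h2 (by rw [hz'a, hz'a1]; omega)
      have e2 : kap n z = kap n z' + 2 := by
        rw [hzz']
        exact kap_fix h1 h2 hz'a hz'a1
      omega
    · exact word_fix hz hzi h1 h2 hza
  · -- conj case, j = b - 1
    have hzbne : z b ≠ b - 1 := by
      intro he
      rcases eq_or_lt_of_le hzb with h | h
      · omega
      · exact hS2 ⟨h, by omega⟩
    set j := b - 1 with hj
    have h1 : (1:ℤ) ≤ j := by omega
    have h2 : j ≤ (n:ℤ) := by omega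
    have hjb : j + 1 = b := by omega
    have hg : b < z j := p4 j (by omega) (by omega) (by omega)
    set z' := tA j * z * tA j with hz'def
    have hz'S : z' ∈ Sgrp n :=
      Sgrp_mul (Sgrp_mul (tA_mem_Sgrp h1 h2) hz) (tA_mem_Sgrp h1 h2)
    have hz'inv : z'⁻¹ = z' := by
      rw [hz'def, mul_inv_rev, mul_inv_rev, tA_inv, hzi, mul_assoc]
    have hz'app : ∀ x, z' x = tA j (z (tA j x)) := by
      intro x
      simp [hz'def, Equiv.Perm.mul_apply]
    have hz'j : z' j = tA j (z b) := by
      rw [hz'app]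
      congr 2
      rw [tA_left, hjb]
    have hz'j1 : z' (j+1) = z j := by
      rw [hz'app, hjb]
      have : tA j b = j := by rw [← hjb, tA_right]
      rw [this]
      exact tA_other j (z j) (by omega) (by omega)
    have hz'jle : z' j ≤ j := by
      rw [hz'j]
      rcases eq_or_lt_of_le hzb with he | hlt
      · rw [he, ← hjb, tA_right]
      · rw [tA_other j (z b) (by omega) (by omega)]
        omega
    have hcond1 : z' j < z' (j+1) := by
      rw [hz'j1]
      omega
    have hcond2 : ¬(z' j = j ∧ z' (j+1) = j+1) := by
      rintro ⟨-, he⟩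
      rw [hz'j1] at he
      omega
    have hzz' : z = tA j * z' * tA j := by
      apply Equiv.ext
      intro x
      simp only [Equiv.Perm.mul_apply]
      rw [hz'app (tA j x), tA_invol, tA_invol]
    refine ⟨j, z', h1, h2, hz'S, hz'inv, ?_, ?_, Or.inr ⟨hcond1, hcond2, hzz'⟩⟩
    · have e1 : NN n z = NN n z' + 2 := by
        rw [hzz']
        exact NN_conj hz'S hz'inv h1 h2 hcond1 hcond2
      have e2 : kap n z = kap n z' := by
        rw [hzz']
        exact kap_conj h1 h2
      omega
    · have hwc := word_conj hzi h1 h2 (show ¬ z j ≤ j by omega)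
        (show z j ≠ j + 1 by omega) (show z (j+1) ≠ j by rw [hjb]; omega)
      rw [← hz'def] at hwc
      rw [hwc, dedupFirst_map (tA j).injective, List.map_map]
      symm
      have : ∀ x ∈ dedupFirst (cycWordDes n z), (tA j ∘ tA j) x = x := by
        intro x _
        exact tA_invol j x
      rw [List.map_congr_left this, List.map_id']
end S17

namespace S17

lemma exmain {n : ℕ} : ∀ m : ℕ, ∀ z : Equiv.Perm ℤ, z ∈ Sgrp n → z⁻¹ = z →
    2 * NN n z + kap n z = m →
    ∃ l : List ℤ, Chain n l z ∧ ∀ i : ℤ, 1 ≤ i → i ≤ (n:ℤ)+1 →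
      ((l.map tA).prod) i = (dedupFirst (cycWordDes n z)).getD (i-1).toNat 0 := by
  intro m
  induction m using Nat.strong_induction_on with
  | _ m ih =>
    intro z hz hzi hm
    rcases eq_or_ne z 1 with rfl | hne
    · refine ⟨[], Chain.nil, ?_⟩
      intro i hi1 hi2
      simp only [List.map_nil, List.prod_nil, Equiv.Perm.one_apply]
      rw [W_one, getD_LL (by omega)]
      omega
    · obtain ⟨j, z', h1, h2, hz'S, hz'inv, hmeas, hWeq, hcase⟩ := step_lemma hz hzi hne
      have hlt : 2 * NN n z' + kap n z' < m := by omega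
      obtain ⟨l', hch', hagree'⟩ := ih (2 * NN n z' + kap n z') hlt z' hz'S hz'inv rfl
      have hchain : Chain n (j :: l') z := by
        rcases hcase with ⟨hfj, hfj1, hzz⟩ | ⟨hc1, hc2, hzz⟩
        · rw [hzz]
          exact Chain.fix j hch' h1 h2 hfj hfj1
        · rw [hzz]
          exact Chain.conj j hch' h1 h2 hc1 hc2
      refine ⟨j :: l', hchain, ?_⟩
      intro i hi1 hi2
      have hk : ((i-1).toNat) < (dedupFirst (cycWordDes n z')).length := by
        rw [length_W hz'S hz'inv]
        omega
      rw [List.map_cons, List.prod_cons, Equiv.Perm.mul_apply, hagree' i hi1 hi2,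
        hWeq, getD_map_tA hk]

end S17


/-- For every involution `z ∈ S_{n+1}`, the permutation
`[[Cyc(z)]]_des` (the deduplication of the word `b₁a₁b₂a₂⋯b_ma_m`) is an
element of `A^A(z)`, i.e. a minimal-length permutation `w` with `w ∘ w⁻¹ = z`
under the Demazure product `dem`. -/
theorem stmt17 (n : ℕ) (dem : Equiv.Perm ℤ → Equiv.Perm ℤ → Equiv.Perm ℤ)
    (hassoc : ∀ u v w, dem (dem u v) w = dem u (dem v w))
    (hone : ∀ w, dem w 1 = w ∧ dem 1 w = w)
    (hright : ∀ w ∈ Sgrp n, ∀ j : ℤ, 1 ≤ j → j ≤ (n : ℤ) →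
      dem w (tA j) = if lenA n (w * tA j) = lenA n w + 1 then w * tA j else w)
    (hleft : ∀ w ∈ Sgrp n, ∀ j : ℤ, 1 ≤ j → j ≤ (n : ℤ) →
      dem (tA j) w = if lenA n (tA j * w) = lenA n w + 1 then tA j * w else w)
    (z : Equiv.Perm ℤ) (hz : z ∈ Sgrp n) (hzi : z⁻¹ = z) :
    ∃ w : Equiv.Perm ℤ, w ∈ Sgrp n ∧
      (∀ i : ℤ, 1 ≤ i → i ≤ (n : ℤ) + 1 →
        w i = (dedupFirst (cycWordDes n z)).getD (i - 1).toNat 0) ∧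
      dem w w⁻¹ = z ∧
      ∀ v ∈ Sgrp n, dem v v⁻¹ = z → lenA n w ≤ lenA n v := by
  obtain ⟨l, hchain, hagree⟩ := S17.exmain (2 * S17.NN n z + S17.kap n z) z hz hzi rfl
  obtain ⟨hlet, -, -, hmeas, hlen, hdem⟩ := S17.chain_main hassoc hone hright hleft hchain
  refine ⟨(l.map tA).prod, S17.prod_mem_Sgrp l hlet, hagree, hdem, ?_⟩
  intro v hv hvz
  obtain ⟨-, -, hbound⟩ := S17.lower_bound hassoc hone hright hleft hv
  rw [hvz] at hbound
  rw [hlen]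
  omega
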